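/- The marginal density of the unconstrained components b of a PTMVN random vector is given by: for every b ∈ ℝ^{q−1}, ∫_l^u φ_q((ω,b) | μ, Σ) / (Φ(υ) − Φ(λ)) dω = [ (Φ(υ_b) − Φ(λ_b)) / (Φ(υ) − Φ(λ)) ] · φ_{q−1}(b | μ_b, Σ_b), where μ_{ω|b} = μ_ω + σ_{bω}ᵀ Σ_b⁻¹ (b − μ_b), σ²_{ω|b} = σ_ω² − σ_{bω}ᵀ Σ_b⁻¹ σ_{bω} > 0, υ_b = (u − μ_{ω|b})/σ_{ω|b}, and λ_b = (l − μ_{ω|b})/σ_{ω|b}. (Proposition 3 of the paper, marginal of b.) -/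

import Mathlib

open MeasureTheory Matrix Real

/-- The standard normal probability density function φ. -/
noncomputable def stdPDF (x : ℝ) : ℝ :=
  (Real.sqrt (2 * Real.pi))⁻¹ * Real.exp (-(x ^ 2) / 2)

/-- The standard normal cumulative distribution function Φ. -/
noncomputable def stdCDF (x : ℝ) : ℝ := ∫ t in Set.Iic x, stdPDF t

/-- The `n`-variate normal density `φ_n(x | μ, Σ)`. -/
noncomputable def mvnPDF {n : ℕ} (μ : Fin n → ℝ) (S : Matrix (Fin n) (Fin n) ℝ)
    (x : Fin n → ℝ) : ℝ :=
  (Real.sqrt ((2 * Real.pi) ^ n * S.det))⁻¹ *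
    Real.exp (-((x - μ) ⬝ᵥ (S⁻¹ *ᵥ (x - μ))) / 2)

/-- The truncated normal density `f_TN(x | m, s², l, u)`. -/
noncomputable def tnPDF (m s l u x : ℝ) : ℝ :=
  (if l < x ∧ x < u then s⁻¹ * stdPDF ((x - m) / s) else 0) /
    (stdCDF ((u - m) / s) - stdCDF ((l - m) / s))

/- ### Auxiliary lemmas -/

lemma stdPDF_integrable : Integrable stdPDF := by
  have h : Integrable (fun x : ℝ => Real.exp (-(2⁻¹ : ℝ) * x ^ 2)) :=
    integrable_exp_neg_mul_sq (by norm_num)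
  have := h.const_mul (Real.sqrt (2 * Real.pi))⁻¹
  refine this.congr ?_
  filter_upwards with x
  simp only [stdPDF]
  ring_nf

lemma integral_std_chunk (m s : ℝ) (hs : 0 < s) (l u : ℝ) :
    ∫ ω in l..u, s⁻¹ * stdPDF ((ω - m) / s)
      = stdCDF ((u - m) / s) - stdCDF ((l - m) / s) := by
  rw [intervalIntegral.integral_const_mul, intervalIntegral.integral_comp_sub_right
      (fun x => stdPDF (x / s)) m, intervalIntegral.integral_comp_div _ hs.ne']
  rw [smul_eq_mul, ← mul_assoc, inv_mul_cancel₀ hs.ne', one_mul]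
  rw [← intervalIntegral.integral_Iic_sub_Iic (stdPDF_integrable.integrableOn)
      (stdPDF_integrable.integrableOn)]
  rfl

/-- Block constructor on `Fin (p+1)`. -/
def blk {p : ℕ} (a : ℝ) (r c : Fin p → ℝ) (M : Matrix (Fin p) (Fin p) ℝ) :
    Matrix (Fin (p + 1)) (Fin (p + 1)) ℝ :=
  Matrix.of (Fin.cons (Fin.cons a r) (fun i => Fin.cons (c i) (M i)))

@[simp] lemma blk00 {p a} {r c : Fin p → ℝ} {M} : blk a r c M 0 0 = a := rfl
@[simp] lemma blk0s {p a} {r c : Fin p → ℝ} {M} (j : Fin p) : blk a r c M 0 j.succ = r j := rfl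
@[simp] lemma blks0 {p a} {r c : Fin p → ℝ} {M} (i : Fin p) : blk a r c M i.succ 0 = c i := by
  simp [blk]
@[simp] lemma blkss {p a} {r c : Fin p → ℝ} {M} (i j : Fin p) :
    blk a r c M i.succ j.succ = M i j := by simp [blk]

lemma blk_mul {p : ℕ} (a a' : ℝ) (r c r' c' : Fin p → ℝ) (M M' : Matrix (Fin p) (Fin p) ℝ) :
    blk a r c M * blk a' r' c' M' =
      blk (a * a' + r ⬝ᵥ c') (fun j => a * r' j + ∑ m, r m * M' m j)
        (fun i => c i * a' + ∑ m, M i m * c' m)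
        (fun i j => c i * r' j + ∑ m, M i m * M' m j) := by
  ext i j
  induction i using Fin.cases <;> induction j using Fin.cases <;>
    simp [Matrix.mul_apply, Fin.sum_univ_succ, dotProduct, blk]

lemma blk_mulVec {p : ℕ} (a : ℝ) (r c : Fin p → ℝ) (M : Matrix (Fin p) (Fin p) ℝ)
    (x : ℝ) (v : Fin p → ℝ) :
    blk a r c M *ᵥ Fin.cons x v = Fin.cons (a * x + r ⬝ᵥ v) (fun i => c i * x + (M *ᵥ v) i) := by
  ext i
  induction i using Fin.cases <;>
    simp [Matrix.mulVec, dotProduct, Fin.sum_univ_succ]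

lemma cons_dot {p : ℕ} (x y : ℝ) (v w : Fin p → ℝ) :
    Fin.cons x v ⬝ᵥ Fin.cons y w = x * y + v ⬝ᵥ w := by
  simp [dotProduct, Fin.sum_univ_succ]

lemma fin_cons_sub {p : ℕ} (x y : ℝ) (v w : Fin p → ℝ) :
    (Fin.cons x v - Fin.cons y w : Fin (p+1) → ℝ) = Fin.cons (x - y) (v - w) := by
  ext i
  induction i using Fin.cases <;> simp

lemma det_blk_upper {p : ℕ} (a : ℝ) (r : Fin p → ℝ) (M : Matrix (Fin p) (Fin p) ℝ) :
    (blk a r 0 M).det = a * M.det := by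
  rw [Matrix.det_succ_column_zero, Fin.sum_univ_succ]
  simp only [Fin.val_zero, pow_zero, one_mul, blk00]
  have h0 : ∀ i : Fin p, blk a r 0 M i.succ 0 = 0 := fun i => blks0 i
  rw [Finset.sum_eq_zero (fun i _ => by rw [h0]; ring)]
  have : (blk a r (0 : Fin p → ℝ) M).submatrix (Fin.succAbove 0) Fin.succ = M := by
    ext i j
    simp [Fin.succAbove, Matrix.submatrix_apply]
  rw [this]
  ring

lemma sum_mul_mul {p : ℕ} (v w : Fin p → ℝ) (a : ℝ) :
    ∑ m, v m * w m * a = (v ⬝ᵥ w) * a := by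
  rw [dotProduct, Finset.sum_mul]

lemma sum_helper1 {p : ℕ} (v w : Fin p → ℝ) (c : ℝ) :
    ∑ m, v m * (-(w m) / c) = -(v ⬝ᵥ w) / c := by
  calc ∑ m, v m * (-(w m) / c) = ∑ m, v m * w m * (-c⁻¹) :=
        Finset.sum_congr rfl fun m _ => by ring
    _ = (v ⬝ᵥ w) * (-c⁻¹) := sum_mul_mul v w _
    _ = -(v ⬝ᵥ w) / c := by ring

lemma sum_helper2 {p : ℕ} (v w : Fin p → ℝ) (a c : ℝ) :
    ∑ m, v m * (w m * a / c) = (v ⬝ᵥ w) * a / c := by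
  calc ∑ m, v m * (w m * a / c) = ∑ m, v m * w m * (a / c) :=
        Finset.sum_congr rfl fun m _ => by ring
    _ = (v ⬝ᵥ w) * (a / c) := sum_mul_mul v w _
    _ = (v ⬝ᵥ w) * a / c := by ring

lemma sum_helper3 {p : ℕ} (v w : Fin p → ℝ) (c : ℝ) :
    ∑ m, (-(v m) / c) * w m = -(v ⬝ᵥ w) / c := by
  calc ∑ m, (-(v m) / c) * w m = ∑ m, v m * w m * (-c⁻¹) :=
        Finset.sum_congr rfl fun m _ => by ring
    _ = (v ⬝ᵥ w) * (-c⁻¹) := sum_mul_mul v w _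
    _ = -(v ⬝ᵥ w) / c := by ring

/-- Proposition 3 (marginal of b): the marginal density of the unconstrained components
of a PTMVN random vector; the conditional variance `σ²_{ω|b}` is positive. -/
theorem ptmvn_marginal_b {p : ℕ} (hp : 1 ≤ p)
    (μω : ℝ) (μb : Fin p → ℝ) (σω : ℝ) (hσω : 0 < σω)
    (σbω : Fin p → ℝ) (Sb : Matrix (Fin p) (Fin p) ℝ) (hSb : Sb.PosDef)
    (S : Matrix (Fin (p + 1)) (Fin (p + 1)) ℝ)
    (hSsymm : S.IsSymm) (hSpd : S.PosDef)
    (h00 : S 0 0 = σω ^ 2)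
    (h0i : ∀ i : Fin p, S 0 i.succ = σbω i)
    (hi0 : ∀ i : Fin p, S i.succ 0 = σbω i)
    (hij : ∀ i j : Fin p, S i.succ j.succ = Sb i j)
    (l u : ℝ) (hlu : l < u) :
    0 < σω ^ 2 - σbω ⬝ᵥ (Sb⁻¹ *ᵥ σbω) ∧
    ∀ (b : Fin p → ℝ),
      (∫ ω in l..u,
          mvnPDF (Fin.cons μω μb) S (Fin.cons ω b) /
            (stdCDF ((u - μω) / σω) - stdCDF ((l - μω) / σω)))
        = ((stdCDF ((u - (μω + σbω ⬝ᵥ (Sb⁻¹ *ᵥ (b - μb)))) /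
                Real.sqrt (σω ^ 2 - σbω ⬝ᵥ (Sb⁻¹ *ᵥ σbω))) -
            stdCDF ((l - (μω + σbω ⬝ᵥ (Sb⁻¹ *ᵥ (b - μb)))) /
                Real.sqrt (σω ^ 2 - σbω ⬝ᵥ (Sb⁻¹ *ᵥ σbω)))) /
            (stdCDF ((u - μω) / σω) - stdCDF ((l - μω) / σω))) *
          mvnPDF μb Sb b := by
  classical
  set k : Fin p → ℝ := Sb⁻¹ *ᵥ σbω with hk
  set c : ℝ := σω ^ 2 - σbω ⬝ᵥ k with hcdef
  -- basic facts about Sb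
  have hdetSb : 0 < Sb.det := hSb.det_pos
  have hSbunit : IsUnit Sb.det := isUnit_iff_ne_zero.mpr hdetSb.ne'
  have hSb1 : Sb * Sb⁻¹ = 1 := Matrix.mul_nonsing_inv _ hSbunit
  have hSbk : Sb *ᵥ k = σbω := by
    rw [hk, Matrix.mulVec_mulVec, hSb1, Matrix.one_mulVec]
  have hSbsymm : Sbᵀ = Sb := by
    ext i j
    have := congrFun (congrFun hSsymm.eq j.succ) i.succ
    simp only [Matrix.transpose_apply] at this ⊢
    rw [← hij i j, ← hij j i]
    exact this.symm
  have hSbinvsymm : (Sb⁻¹)ᵀ = Sb⁻¹ := by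
    rw [Matrix.transpose_nonsing_inv, hSbsymm]
  have hvecMulinv : σbω ᵥ* Sb⁻¹ = k := by
    conv_lhs => rw [← hSbinvsymm]
    rw [Matrix.vecMul_transpose, hk]
  have hdotk : ∀ v : Fin p → ℝ, σbω ⬝ᵥ (Sb⁻¹ *ᵥ v) = k ⬝ᵥ v := by
    intro v
    rw [Matrix.dotProduct_mulVec, hvecMulinv]
  have hsumSbinv : ∀ j : Fin p, ∑ m, σbω m * Sb⁻¹ m j = k j := by
    intro j
    have := congrFun hvecMulinv j
    simpa [Matrix.vecMul, dotProduct] using this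
  -- S as a block matrix
  have hSblk : S = blk (σω ^ 2) σbω σbω Sb := by
    ext i j
    induction i using Fin.cases <;> induction j using Fin.cases <;>
      simp [h00, h0i, hi0, hij]
  -- positivity of the Schur complement
  have hc : 0 < c := by
    have hv : (Fin.cons 1 (-k) : Fin (p+1) → ℝ) ≠ 0 := by
      intro h
      have := congrFun h 0
      simp at this
    have hpos := hSpd.dotProduct_mulVec_pos hv
    simp only [star_trivial] at hpos
    rw [hSblk, blk_mulVec, cons_dot] at hpos
    have hf : (fun i => σbω i * 1 + (Sb *ᵥ (-k)) i) = (0 : Fin p → ℝ) := by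
      funext i
      rw [Matrix.mulVec_neg, hSbk]
      simp
    rw [hf, dotProduct_zero, dotProduct_neg] at hpos
    rw [hcdef]
    nlinarith [hpos]
  have hcne : c ≠ 0 := hc.ne'
  -- the explicit inverse of S
  set T : Matrix (Fin (p+1)) (Fin (p+1)) ℝ :=
    blk c⁻¹ (fun j => -(k j) / c) (fun i => -(k i) / c)
      (fun i j => Sb⁻¹ i j + k i * k j / c) with hT
  have hST : S * T = 1 := by
    erw [hSblk, hT, blk_mul]
    ext i j
    induction i using Fin.cases <;> induction j using Fin.cases
    · -- (0,0)
      erw [blk00, Matrix.one_apply_eq]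
      rw [show σbω ⬝ᵥ (fun j => -(k j) / c) = -(σbω ⬝ᵥ k) / c from sum_helper1 σbω k c]
      rw [hcdef] at hcne ⊢
      field_simp
      ring
    · -- (0, succ)
      rename_i j
      erw [blk0s]
      have hsplit : ∑ m, σbω m * (Sb⁻¹ m j + k m * k j / c)
          = k j + (σbω ⬝ᵥ k) * k j / c := by
        rw [show (fun m => σbω m * (Sb⁻¹ m j + k m * k j / c))
              = fun m => σbω m * Sb⁻¹ m j + σbω m * (k m * k j / c) from
            funext fun m => by ring, Finset.sum_add_distrib, hsumSbinv j, sum_helper2]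
      rw [hsplit, Matrix.one_apply_ne (Fin.succ_ne_zero j).symm]
      rw [hcdef] at hcne ⊢
      field_simp
      ring
    · -- (succ, 0)
      rename_i i
      erw [blks0]
      have h1 : ∑ m, Sb i m * (-(k m) / c) = -(σbω i) / c := by
        rw [sum_helper1, show Sb i ⬝ᵥ k = σbω i from congrFun hSbk i]
      rw [h1, Matrix.one_apply_ne (Fin.succ_ne_zero i)]
      field_simp
      ring
    · -- (succ, succ)
      rename_i i j
      erw [blkss]
      have hsplit : ∑ m, Sb i m * (Sb⁻¹ m j + k m * k j / c)
          = (1 : Matrix (Fin p) (Fin p) ℝ) i j + σbω i * k j / c := by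
        rw [show (fun m => Sb i m * (Sb⁻¹ m j + k m * k j / c))
              = fun m => Sb i m * Sb⁻¹ m j + Sb i m * (k m * k j / c) from
            funext fun m => by ring, Finset.sum_add_distrib, sum_helper2]
        rw [show ∑ m, Sb i m * Sb⁻¹ m j = (Sb * Sb⁻¹) i j from (Matrix.mul_apply).symm, hSb1]
        rw [show Sb i ⬝ᵥ k = σbω i from congrFun hSbk i]
      rw [hsplit]
      by_cases h : i = j
      · subst h
        rw [Matrix.one_apply_eq, Matrix.one_apply_eq]
        ring
      · rw [Matrix.one_apply_ne h, Matrix.one_apply_ne (by simpa [Fin.succ_inj] using h : i.succ ≠ j.succ)]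
        ring
  have hSinv : S⁻¹ = T := Matrix.inv_eq_right_inv hST
  -- determinant of S
  have hdetS : S.det = c * Sb.det := by
    have hSW : S * blk 1 0 (-k) 1 = blk c σbω 0 Sb := by
      erw [hSblk, blk_mul]
      ext i j
      induction i using Fin.cases <;> induction j using Fin.cases
      · erw [blk00, blk00, dotProduct_neg, hcdef]; ring
      · rename_i j
        erw [blk0s, blk0s]
        rw [show ∑ x, σbω x * (1 : Matrix (Fin p) (Fin p) ℝ) x j
              = (σbω ᵥ* (1 : Matrix (Fin p) (Fin p) ℝ)) j from rfl, Matrix.vecMul_one]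
        simp
      · rename_i i
        erw [blks0, blks0]
        have h1 : ∑ x, Sb i x * (-k) x = -(σbω i) := by
          rw [Finset.sum_congr rfl (fun x _ => show Sb i x * (-k) x = Sb i x * k x * (-1) from by
            simp only [Pi.neg_apply]; ring), sum_mul_mul,
            show Sb i ⬝ᵥ k = σbω i from congrFun hSbk i]
          ring
        rw [h1]
        simp
      · rename_i i j
        erw [blkss, blkss]
        rw [show ∑ m, Sb i m * (1 : Matrix (Fin p) (Fin p) ℝ) m j
              = (Sb * (1 : Matrix (Fin p) (Fin p) ℝ)) i j from (Matrix.mul_apply).symm, Matrix.mul_one]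
        simp
    have hdetW : (blk 1 0 (-k) 1 : Matrix (Fin (p+1)) (Fin (p+1)) ℝ).det = 1 := by
      rw [← Matrix.det_transpose]
      have h2 : (blk 1 0 (-k) 1 : Matrix (Fin (p+1)) (Fin (p+1)) ℝ)ᵀ
          = blk 1 (-k) 0 ((1 : Matrix (Fin p) (Fin p) ℝ)ᵀ) := by
        ext i j
        induction i using Fin.cases <;> induction j using Fin.cases <;>
          simp [Matrix.transpose_apply, Matrix.one_apply, eq_comm]
      rw [h2, det_blk_upper]
      simp
    have h3 := congrArg Matrix.det hSW
    rw [Matrix.det_mul, hdetW, mul_one, det_blk_upper] at h3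
    exact h3
  -- quadratic form decomposition
  have hquad : ∀ (d0 : ℝ) (db : Fin p → ℝ),
      (Fin.cons d0 db : Fin (p+1) → ℝ) ⬝ᵥ (T *ᵥ Fin.cons d0 db)
        = (d0 - k ⬝ᵥ db) ^ 2 / c + db ⬝ᵥ (Sb⁻¹ *ᵥ db) := by
    intro d0 db
    have hM : ((fun i j => Sb⁻¹ i j + k i * k j / c : Matrix (Fin p) (Fin p) ℝ) *ᵥ db)
        = fun i => (Sb⁻¹ *ᵥ db) i + k i * (k ⬝ᵥ db) / c := by
      funext i
      show ∑ j, (Sb⁻¹ i j + k i * k j / c) * db j = _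
      rw [show (fun j => (Sb⁻¹ i j + k i * k j / c) * db j)
            = fun j => Sb⁻¹ i j * db j + (k i / c) * (k j * db j) from
          funext fun j => by ring, Finset.sum_add_distrib, ← Finset.mul_sum]
      rw [show ∑ j, Sb⁻¹ i j * db j = (Sb⁻¹ *ᵥ db) i from rfl,
        show ∑ j, k j * db j = k ⬝ᵥ db from rfl]
      ring
    erw [hT, blk_mulVec, hM, cons_dot,
      show (fun j => -(k j) / c) ⬝ᵥ db = -(k ⬝ᵥ db) / c from sum_helper3 k db c]
    have h3 : db ⬝ᵥ (fun i => -(k i) / c * d0 + ((Sb⁻¹ *ᵥ db) i + k i * (k ⬝ᵥ db) / c))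
        = -(k ⬝ᵥ db) * d0 / c + db ⬝ᵥ (Sb⁻¹ *ᵥ db) + (k ⬝ᵥ db) * (k ⬝ᵥ db) / c := by
      show ∑ i, db i * _ = _
      rw [show (fun i => db i * (-(k i) / c * d0 + ((Sb⁻¹ *ᵥ db) i + k i * (k ⬝ᵥ db) / c)))
            = fun i => db i * k i * (-d0 / c) + (db i * (Sb⁻¹ *ᵥ db) i
                + db i * k i * ((k ⬝ᵥ db) / c)) from funext fun i => by ring,
        Finset.sum_add_distrib, Finset.sum_add_distrib, sum_mul_mul, sum_mul_mul,
        show ∑ i, db i * (Sb⁻¹ *ᵥ db) i = db ⬝ᵥ (Sb⁻¹ *ᵥ db) from rfl,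
        show db ⬝ᵥ k = k ⬝ᵥ db from dotProduct_comm db k]
      ring
    rw [h3]
    field_simp
    ring
  -- conclusion
  refine ⟨hc, ?_⟩
  intro b
  simp only [hdotk]
  have key : ∀ ω : ℝ, mvnPDF (Fin.cons μω μb) S (Fin.cons ω b)
      = ((Real.sqrt c)⁻¹ * stdPDF ((ω - (μω + k ⬝ᵥ (b - μb))) / Real.sqrt c))
          * mvnPDF μb Sb b := by
    intro ω
    unfold mvnPDF stdPDF
    rw [fin_cons_sub, hSinv, hquad (ω - μω) (b - μb), hdetS]
    have hsc : Real.sqrt c ^ 2 = c := Real.sq_sqrt hc.le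
    have h2pi : (0:ℝ) < 2 * Real.pi := by positivity
    have hsplit : Real.sqrt ((2*Real.pi)^(p+1) * (c * Sb.det))
        = Real.sqrt c * (Real.sqrt (2*Real.pi) * Real.sqrt ((2*Real.pi)^p * Sb.det)) := by
      rw [show (2*Real.pi)^(p+1) * (c * Sb.det)
            = c * ((2*Real.pi) * ((2*Real.pi)^p * Sb.det)) from by ring,
        Real.sqrt_mul hc.le, Real.sqrt_mul h2pi.le]
    have hexp : Real.exp (-((ω - μω - k ⬝ᵥ (b - μb)) ^ 2 / c
            + (b - μb) ⬝ᵥ (Sb⁻¹ *ᵥ (b - μb))) / 2)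
        = Real.exp (-(((ω - (μω + k ⬝ᵥ (b - μb))) / Real.sqrt c) ^ 2) / 2)
          * Real.exp (-((b - μb) ⬝ᵥ (Sb⁻¹ *ᵥ (b - μb))) / 2) := by
      rw [← Real.exp_add]
      congr 1
      rw [div_pow, hsc]
      ring
    rw [hsplit, hexp]
    rw [mul_inv, mul_inv]
    ring
  simp only [key]
  rw [intervalIntegral.integral_div, intervalIntegral.integral_mul_const,
    integral_std_chunk (μω + k ⬝ᵥ (b - μb)) (Real.sqrt c) (Real.sqrt_pos.mpr hc) l u]
  ring
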